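/- arXiv:1907.02261 — 2 statements merged into one kernel-verified Lean document; each statement's English description precedes it below -/
import Mathlib

section
/- Let m(x) = Σ_{k=1}^K β_k N(x|ν_k, T_k) be a Gaussian mixture on ℝ^d that is consistent with the data set f with parameter ε = 1. Then m and f have the same mean: ∫_{ℝ^d} x m(x) dx = ∫_{ℝ^d} x f(x) dx. -/
open MeasureTheory Matrix

/-- The Gaussian density `N(x|ν,T)` on `ℝ^d`. -/
noncomputable def gaussian {d : ℕ} (ν : Fin d → ℝ) (T : Matrix (Fin d) (Fin d) ℝ)
    (x : Fin d → ℝ) : ℝ :=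
  (2 * Real.pi) ^ (-(d : ℝ) / 2) * T.det ^ (-(1 : ℝ) / 2) *
    Real.exp (-(1 / 2) * ((x - ν) ⬝ᵥ (T⁻¹ *ᵥ (x - ν))))

variable {d : ℕ}

lemma gaussian_pos {ν : Fin d → ℝ} {T : Matrix (Fin d) (Fin d) ℝ} (hT : T.PosDef)
    (x : Fin d → ℝ) : 0 < gaussian ν T x :=
  mul_pos (mul_pos (Real.rpow_pos_of_pos (by positivity) _)
    (Real.rpow_pos_of_pos hT.det_pos _)) (Real.exp_pos _)

lemma gaussian_continuous (ν : Fin d → ℝ) (T : Matrix (Fin d) (Fin d) ℝ) :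
    Continuous (gaussian ν T) := by
  apply Continuous.mul continuous_const
  apply Real.continuous_exp.comp
  apply Continuous.mul continuous_const
  simp only [dotProduct, mulVec, Pi.sub_apply]
  exact continuous_finset_sum _ fun i _ =>
    ((continuous_apply i).sub continuous_const).mul
      (continuous_finset_sum _ fun j _ =>
        continuous_const.mul ((continuous_apply j).sub continuous_const))

lemma diag_pos {T : Matrix (Fin d) (Fin d) ℝ} (hT : T.PosDef) (i : Fin d) : 0 < T i i := by
  have := hT.diag_pos (i := i)
  simpa using this

lemma map_affine {A : Matrix (Fin d) (Fin d) ℝ} (hA : A.det ≠ 0) :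
    Measure.map (Matrix.toLin' A) (volume : Measure (Fin d → ℝ)) =
      ENNReal.ofReal |A.det|⁻¹ • volume := by
  rw [Real.map_linearMap_volume_pi_eq_smul_volume_pi (by rw [LinearMap.det_toLin']; exact hA),
    LinearMap.det_toLin', abs_inv]

lemma integral_comp_affine (ν : Fin d → ℝ) {A : Matrix (Fin d) (Fin d) ℝ} (hA : A.det ≠ 0)
    {F : (Fin d → ℝ) → ℝ} (hF : Continuous F) :
    ∫ x, F x = |A.det| * ∫ y, F (ν + A *ᵥ y) := by
  have h0 : ∫ x, F x = ∫ z, F (ν + z) := (integral_add_left_eq_self F ν).symm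
  have hc : Continuous (Matrix.toLin' A : (Fin d → ℝ) →ₗ[ℝ] (Fin d → ℝ)) :=
    LinearMap.continuous_of_finiteDimensional _
  have hG : Continuous fun z => F (ν + z) := hF.comp (continuous_const.add continuous_id)
  have h1 : ∫ y, F (ν + (Matrix.toLin' A) y) ∂(volume : Measure (Fin d → ℝ))
      = ∫ z, F (ν + z) ∂(Measure.map (Matrix.toLin' A) volume) :=
    (integral_map hc.measurable.aemeasurable hG.aestronglyMeasurable).symm
  have h2 : ∀ y, (Matrix.toLin' A) y = A *ᵥ y := fun y => Matrix.toLin'_apply A y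
  rw [h0]
  simp_rw [← h2]
  rw [h1, map_affine hA, integral_smul_measure, ENNReal.toReal_ofReal (by positivity),
    smul_eq_mul, ← mul_assoc, mul_inv_cancel₀ (by simpa using hA), one_mul]

lemma integrable_comp_affine (ν : Fin d → ℝ) {A : Matrix (Fin d) (Fin d) ℝ} (hA : A.det ≠ 0)
    {F : (Fin d → ℝ) → ℝ} (hF : Continuous F)
    (h : Integrable (fun y => F (ν + A *ᵥ y))) : Integrable F := by
  have hc : Continuous (Matrix.toLin' A : (Fin d → ℝ) →ₗ[ℝ] (Fin d → ℝ)) :=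
    LinearMap.continuous_of_finiteDimensional _
  have h2 : ∀ y, (Matrix.toLin' A) y = A *ᵥ y := fun y => Matrix.toLin'_apply A y
  have hG : Continuous fun z => F (ν + z) := hF.comp (continuous_const.add continuous_id)
  have h3 : Integrable (fun z => F (ν + z)) (Measure.map (Matrix.toLin' A) volume) := by
    rw [integrable_map_measure hG.aestronglyMeasurable hc.measurable.aemeasurable]
    simpa [Function.comp_def, h2] using h
  rw [map_affine hA] at h3
  have h4 : Integrable (fun z => F (ν + z)) volume := by
    rw [integrable_smul_measure (by positivity) (by simp)] at h3
    exact h3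
  have h5 := h4.comp_add_left (-ν)
  simpa using h5

lemma exp_dot_eq_prod (y : Fin d → ℝ) :
    Real.exp (-(1/2 : ℝ) * (y ⬝ᵥ y)) = ∏ l, Real.exp (-(1/2 : ℝ) * (y l)^2) := by
  rw [← Real.exp_sum]
  congr 1
  simp [dotProduct, Finset.mul_sum, sq]

lemma integrable_E : Integrable (fun y : Fin d → ℝ => Real.exp (-(1/2 : ℝ) * (y ⬝ᵥ y))) := by
  simp_rw [exp_dot_eq_prod]
  exact Integrable.fintype_prod (f := fun _ (t : ℝ) => Real.exp (-(1/2 : ℝ) * t^2))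
    (fun _ => integrable_exp_neg_mul_sq (by norm_num))

lemma integral_E : ∫ y : Fin d → ℝ, Real.exp (-(1/2 : ℝ) * (y ⬝ᵥ y))
    = (2 * Real.pi) ^ ((d : ℝ) / 2) := by
  simp_rw [exp_dot_eq_prod]
  rw [MeasureTheory.volume_pi, MeasureTheory.integral_fintype_prod_eq_pow (ι := Fin d)
    (f := fun t : ℝ => Real.exp (-(1/2 : ℝ) * t^2)), integral_gaussian]
  have h1 : Real.pi / (1/2 : ℝ) = 2 * Real.pi := by ring
  rw [h1, Fintype.card_fin, Real.sqrt_eq_rpow, ← Real.rpow_natCast ((2*Real.pi) ^ ((1:ℝ)/2)) d,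
    ← Real.rpow_mul (by positivity)]
  ring_nf

lemma integrable_coord_E (j : Fin d) :
    Integrable (fun y : Fin d → ℝ => y j * Real.exp (-(1/2 : ℝ) * (y ⬝ᵥ y))) := by
  have key : ∀ y : Fin d → ℝ, y j * Real.exp (-(1/2 : ℝ) * (y ⬝ᵥ y))
      = ∏ l, (if l = j then y l else 1) * Real.exp (-(1/2 : ℝ) * (y l)^2) := by
    intro y
    rw [Finset.prod_mul_distrib, ← exp_dot_eq_prod]
    congr 1
    simp
  simp_rw [key]
  refine Integrable.fintype_prod
    (f := fun l (t : ℝ) => (if l = j then t else 1) * Real.exp (-(1/2 : ℝ) * t^2)) (fun l => ?_)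
  by_cases h : l = j
  · simpa [h] using integrable_mul_exp_neg_mul_sq (b := (1/2:ℝ)) (by norm_num)
  · simpa [h] using integrable_exp_neg_mul_sq (b := (1/2:ℝ)) (by norm_num)

open scoped MatrixOrder in
lemma sqrt_facts {T : Matrix (Fin d) (Fin d) ℝ} (hT : T.PosDef) :
    ∃ A : Matrix (Fin d) (Fin d) ℝ, A.det ≠ 0 ∧ |A.det| = T.det ^ ((1:ℝ)/2) ∧
      ∀ y : Fin d → ℝ, ((A *ᵥ y) ⬝ᵥ (T⁻¹ *ᵥ (A *ᵥ y))) = y ⬝ᵥ y := by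
  obtain ⟨hAsd, hAA⟩ : ∃ h : (CFC.sqrt T).PosSemidef, CFC.sqrt T * CFC.sqrt T = T :=
    ⟨(CFC.sqrt_nonneg T).posSemidef, CFC.sqrt_mul_sqrt_self T hT.posSemidef.nonneg⟩
  set A := CFC.sqrt T with hA
  have hAT : Aᵀ = A := by
    have := hAsd.1
    exact (Matrix.conjTranspose_eq_transpose_of_trivial A).symm.trans this
  have hdet2 : A.det * A.det = T.det := by rw [← Matrix.det_mul, hAA]
  have hdetA : A.det ≠ 0 := fun h => by
    rw [h, mul_zero] at hdet2; exact hT.det_pos.ne' hdet2.symm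
  have habs : |A.det| = T.det ^ ((1:ℝ)/2) := by
    rw [← Real.sqrt_eq_rpow, ← hdet2, ← sq]
    exact (Real.sqrt_sq_eq_abs _).symm
  refine ⟨A, hdetA, habs, fun y => ?_⟩
  have hTinv : T⁻¹ = A⁻¹ * A⁻¹ := by rw [← hAA, Matrix.mul_inv_rev]
  have hone : A * (T⁻¹ * A) = 1 := by
    rw [hTinv]
    simp only [← Matrix.mul_assoc]
    rw [Matrix.mul_nonsing_inv _ (isUnit_iff_ne_zero.mpr hdetA), Matrix.one_mul, Matrix.nonsing_inv_mul _ (isUnit_iff_ne_zero.mpr hdetA)]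
  rw [Matrix.mulVec_mulVec, Matrix.dotProduct_mulVec]
  rw [show A *ᵥ y = y ᵥ* Aᵀ from (Matrix.vecMul_transpose A y).symm, hAT,
    Matrix.vecMul_vecMul, hone, Matrix.vecMul_one]

lemma integral_coord_E_zero (j : Fin d) :
    ∫ y : Fin d → ℝ, y j * Real.exp (-(1/2 : ℝ) * (y ⬝ᵥ y)) = 0 := by
  have h := integral_neg_eq_self
    (fun y : Fin d → ℝ => y j * Real.exp (-(1/2 : ℝ) * (y ⬝ᵥ y))) volume
  simp only [Pi.neg_apply, neg_dotProduct, dotProduct_neg, neg_neg, neg_mul, integral_neg] at h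
  have hcongr : ∫ (y : Fin d → ℝ), y j * Real.exp (-(1/2:ℝ) * (y ⬝ᵥ y))
      = ∫ (a : Fin d → ℝ), a j * Real.exp (-(1/2 * (a ⬝ᵥ a) : ℝ)) := by
    congr 1; funext y; ring_nf
  rw [hcongr]
  linarith

lemma gaussian_key (ν : Fin d → ℝ) {T : Matrix (Fin d) (Fin d) ℝ}
    {A : Matrix (Fin d) (Fin d) ℝ}
    (quad : ∀ y : Fin d → ℝ, ((A *ᵥ y) ⬝ᵥ (T⁻¹ *ᵥ (A *ᵥ y))) = y ⬝ᵥ y) (y : Fin d → ℝ) :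
    gaussian ν T (ν + A *ᵥ y)
      = ((2 * Real.pi) ^ (-(d : ℝ) / 2) * T.det ^ (-(1 : ℝ) / 2))
        * Real.exp (-(1/2 : ℝ) * (y ⬝ᵥ y)) := by
  unfold gaussian
  rw [add_sub_cancel_left, quad]

lemma gaussian_const_one {T : Matrix (Fin d) (Fin d) ℝ} (hT : T.PosDef)
    {A : Matrix (Fin d) (Fin d) ℝ} (habs : |A.det| = T.det ^ ((1:ℝ)/2)) :
    |A.det| * ((2 * Real.pi) ^ (-(d : ℝ) / 2) * T.det ^ (-(1 : ℝ) / 2))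
      * (2 * Real.pi) ^ ((d : ℝ) / 2) = 1 := by
  rw [habs]
  have ht := hT.det_pos
  have h1 : T.det ^ ((1:ℝ)/2) * T.det ^ (-(1:ℝ)/2) = 1 := by
    rw [← Real.rpow_add ht]; norm_num
  have h2 : (2 * Real.pi) ^ (-(d : ℝ) / 2) * (2 * Real.pi) ^ ((d : ℝ) / 2) = 1 := by
    rw [← Real.rpow_add (by positivity), show (-(d:ℝ)/2 + (d:ℝ)/2) = 0 by ring, Real.rpow_zero]
  calc T.det ^ ((1:ℝ)/2) * ((2 * Real.pi) ^ (-(d : ℝ) / 2) * T.det ^ (-(1 : ℝ) / 2))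
      * (2 * Real.pi) ^ ((d : ℝ) / 2)
      = (T.det ^ ((1:ℝ)/2) * T.det ^ (-(1:ℝ)/2))
        * ((2 * Real.pi) ^ (-(d : ℝ) / 2) * (2 * Real.pi) ^ ((d : ℝ) / 2)) := by ring
    _ = 1 := by rw [h1, h2, mul_one]

lemma gaussian_integral (ν : Fin d → ℝ) {T : Matrix (Fin d) (Fin d) ℝ} (hT : T.PosDef) :
    ∫ x, gaussian ν T x = 1 := by
  obtain ⟨A, hdetA, habs, quad⟩ := sqrt_facts hT
  rw [integral_comp_affine ν hdetA (gaussian_continuous ν T)]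
  simp_rw [gaussian_key ν quad]
  rw [integral_const_mul, integral_E, ← mul_assoc]
  exact gaussian_const_one hT habs

lemma gaussian_coord_decomp (ν : Fin d → ℝ) {T A : Matrix (Fin d) (Fin d) ℝ}
    (quad : ∀ y : Fin d → ℝ, ((A *ᵥ y) ⬝ᵥ (T⁻¹ *ᵥ (A *ᵥ y))) = y ⬝ᵥ y) (i : Fin d) :
    (fun y : Fin d → ℝ => (ν + A *ᵥ y) i * gaussian ν T (ν + A *ᵥ y))
      = fun y : Fin d → ℝ =>
        (((2 * Real.pi) ^ (-(d : ℝ) / 2) * T.det ^ (-(1 : ℝ) / 2)) * ν i)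
          * Real.exp (-(1/2 : ℝ) * (y ⬝ᵥ y))
        + ∑ j, (((2 * Real.pi) ^ (-(d : ℝ) / 2) * T.det ^ (-(1 : ℝ) / 2)) * A i j)
          * (y j * Real.exp (-(1/2 : ℝ) * (y ⬝ᵥ y))) := by
  funext y
  rw [gaussian_key ν quad]
  set C := (2 * Real.pi) ^ (-(d : ℝ) / 2) * T.det ^ (-(1 : ℝ) / 2) with hC
  set E := Real.exp (-(1/2 : ℝ) * (y ⬝ᵥ y)) with hE
  have h1 : (ν + A *ᵥ y) i = ν i + (A *ᵥ y) i := rfl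
  have h2 : (A *ᵥ y) i = ∑ j, A i j * y j := rfl
  rw [h1, h2, add_mul, Finset.sum_mul]
  congr 1
  · ring
  · exact Finset.sum_congr rfl fun j _ => by ring

lemma gaussian_coord_integrable (ν : Fin d → ℝ) {T : Matrix (Fin d) (Fin d) ℝ}
    (hT : T.PosDef) (i : Fin d) :
    Integrable (fun x => x i * gaussian ν T x) := by
  obtain ⟨A, hdetA, habs, quad⟩ := sqrt_facts hT
  apply integrable_comp_affine ν hdetA (F := fun x => x i * gaussian ν T x)
    ((continuous_apply i).mul (gaussian_continuous ν T))
  rw [gaussian_coord_decomp ν quad i]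
  exact (integrable_E.const_mul _).add
    (integrable_finset_sum _ fun j _ => (integrable_coord_E j).const_mul _)

lemma gaussian_mean (ν : Fin d → ℝ) {T : Matrix (Fin d) (Fin d) ℝ} (hT : T.PosDef) (i : Fin d) :
    ∫ x, x i * gaussian ν T x = ν i := by
  obtain ⟨A, hdetA, habs, quad⟩ := sqrt_facts hT
  rw [integral_comp_affine ν hdetA (F := fun x => x i * gaussian ν T x)
    ((continuous_apply i).mul (gaussian_continuous ν T)),
    gaussian_coord_decomp ν quad i,
    integral_add (integrable_E.const_mul _)
      (integrable_finset_sum _ fun j _ => (integrable_coord_E j).const_mul _),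
    integral_finset_sum _ (fun j _ => (integrable_coord_E j).const_mul _)]
  simp_rw [integral_const_mul, integral_coord_E_zero, mul_zero, Finset.sum_const_zero, add_zero,
    integral_E]
  have := gaussian_const_one hT habs
  set C := (2 * Real.pi) ^ (-(d : ℝ) / 2) * T.det ^ (-(1 : ℝ) / 2) with hC
  calc |A.det| * (C * ν i * (2 * Real.pi) ^ ((d : ℝ) / 2))
      = (|A.det| * C * (2 * Real.pi) ^ ((d : ℝ) / 2)) * ν i := by ring
    _ = ν i := by rw [this, one_mul]

/-- A Gaussian mixture consistent with the data set `f` with parameter `ε = 1`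
has the same mean as `f`. -/
theorem mixture_consistent_same_mean {d K : ℕ}
    (f : (Fin d → ℝ) → ℝ) (hf0 : ∀ x, 0 ≤ f x) (hf1 : ∫ x, f x = 1)
    (β : Fin K → ℝ) (hβ : ∀ k, β k ∈ Set.Ioo (0 : ℝ) 1) (hβ1 : ∑ k, β k = 1)
    (ν : Fin K → Fin d → ℝ) (T : Fin K → Matrix (Fin d) (Fin d) ℝ)
    (hTsymm : ∀ k, (T k).IsSymm) (hTpos : ∀ k, (T k).PosDef)
    (m : (Fin d → ℝ) → ℝ) (hm : ∀ x, m x = ∑ k, β k * gaussian (ν k) (T k) x)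
    (γ : Fin K → (Fin d → ℝ) → ℝ)
    (hγ : ∀ k x, γ k x = β k * gaussian (ν k) (T k) x / m x)
    -- consistency with the data set, with parameter ε = 1 :
    (hmean : ∀ k i, ν k i = (∫ x, x i * γ k x * f x) / ∫ x, γ k x * f x)
    (hcov : ∀ k i j, T k i j =
      (1 : ℝ) * (∫ x, (x i - ν k i) * (x j - ν k j) * γ k x * f x) / ∫ x, γ k x * f x)
    (hweight : ∀ k, β k = ∫ x, γ k x * f x) :
    ∀ i, ∫ x, x i * m x = ∫ x, x i * f x := by
  intro i
  rcases Nat.eq_zero_or_pos K with hK | hK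
  · subst hK; simp at hβ1
  haveI : Nonempty (Fin K) := ⟨⟨0, hK⟩⟩
  have hmpos : ∀ x, 0 < m x := fun x => by
    rw [hm x]
    exact Finset.sum_pos (fun k _ => mul_pos (hβ k).1 (gaussian_pos (hTpos k) x))
      Finset.univ_nonempty
  -- LHS equals ∑ β k * ν k i
  have hL : ∫ x, x i * m x = ∑ k, β k * ν k i := by
    have h1 : (fun x => x i * m x) = fun x => ∑ k, β k * (x i * gaussian (ν k) (T k) x) := by
      funext x; rw [hm x, Finset.mul_sum]; exact Finset.sum_congr rfl fun k _ => by ring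
    rw [h1, integral_finset_sum _
      (fun k _ => (gaussian_coord_integrable (ν k) (hTpos k) i).const_mul _)]
    exact Finset.sum_congr rfl fun k _ => by
      rw [integral_const_mul, gaussian_mean (ν k) (hTpos k) i]
  -- responsibilities
  have hsum : ∀ x, ∑ k, γ k x = 1 := fun x => by
    have h1 : ∑ k, γ k x = (∑ k, β k * gaussian (ν k) (T k) x) / m x := by
      rw [Finset.sum_div]; exact Finset.sum_congr rfl fun k _ => (hγ k x)
    rw [h1, ← hm x, div_self (hmpos x).ne']
  have hγ0 : ∀ k x, 0 ≤ γ k x := fun k x => by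
    rw [hγ]
    exact div_nonneg (mul_pos (hβ k).1 (gaussian_pos (hTpos k) x)).le (hmpos x).le
  have hIγf : ∀ k, Integrable (fun x => γ k x * f x) := fun k => by
    by_contra h
    have hw := hweight k
    rw [integral_undef h] at hw
    exact absurd hw (hβ k).1.ne'
  have hIsq : ∀ k, Integrable (fun x => (x i - ν k i) * (x i - ν k i) * γ k x * f x) := fun k => by
    by_contra h
    have hc := hcov k i i
    rw [integral_undef h] at hc
    simp only [mul_zero, one_mul, zero_div] at hc
    exact absurd hc (diag_pos (hTpos k) i).ne'
  have hIcoord : ∀ k, Integrable (fun x => x i * γ k x * f x) := fun k => by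
    have hdom : Integrable (fun x => (x i - ν k i) * (x i - ν k i) * γ k x * f x
        + (1 + |ν k i|) * (γ k x * f x)) := (hIsq k).add ((hIγf k).const_mul _)
    refine hdom.mono' ?_ (ae_of_all _ fun x => ?_)
    · have heq : (fun x : Fin d → ℝ => x i * γ k x * f x)
          = fun x => x i * (γ k x * f x) := by funext x; ring
      rw [heq]
      exact (continuous_apply i).aestronglyMeasurable.mul (hIγf k).1
    · have hγf0 : 0 ≤ γ k x * f x := mul_nonneg (hγ0 k x) (hf0 x)
      have habs : |x i * γ k x * f x| = |x i| * (γ k x * f x) := by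
        rw [mul_assoc, abs_mul, abs_of_nonneg hγf0]
      have hb : |x i| ≤ (x i - ν k i) * (x i - ν k i) + (1 + |ν k i|) := by
        nlinarith [abs_sub_abs_le_abs_sub (x i) (ν k i), sq_nonneg (|x i - ν k i| - 1),
          sq_abs (x i - ν k i)]
      rw [Real.norm_eq_abs, habs]
      calc |x i| * (γ k x * f x)
          ≤ ((x i - ν k i) * (x i - ν k i) + (1 + |ν k i|)) * (γ k x * f x) :=
            mul_le_mul_of_nonneg_right hb hγf0
        _ = (x i - ν k i) * (x i - ν k i) * γ k x * f x
            + (1 + |ν k i|) * (γ k x * f x) := by ring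
  have hval : ∀ k, ∫ x, x i * γ k x * f x = ν k i * β k := fun k => by
    have hβne : (β k) ≠ 0 := (hβ k).1.ne'
    have h := hmean k i
    rw [← hweight k] at h
    exact (div_eq_iff hβne).mp h.symm
  have hfs : (fun x => x i * f x) = fun x => ∑ k, x i * γ k x * f x := by
    funext x
    calc x i * f x = (x i * f x) * ∑ k, γ k x := by rw [hsum x, mul_one]
      _ = ∑ k, x i * γ k x * f x := by
          rw [Finset.mul_sum]; exact Finset.sum_congr rfl fun k _ => by ring
  have hR : ∫ x, x i * f x = ∑ k, ν k i * β k := by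
    rw [hfs, integral_finset_sum _ (fun k _ => hIcoord k)]
    exact Finset.sum_congr rfl fun k _ => hval k
  rw [hL, hR]
  exact Finset.sum_congr rfl fun k _ => mul_comm _ _
end

section
/- Let m(x) = Σ_{k=1}^K β_k N(x|ν_k, T_k) be a Gaussian mixture on ℝ^d that is consistent with the data set f with parameter ε > 0. Then the family of quadruples (u_k, λ_k, m_k, β_k), k = 1,…,K, with u_k(x) = (ε/2)(x-ν_k)ᵀ T_k^{-1} (x-ν_k), λ_k = ε² Tr(T_k^{-1}), and m_k(x) = N(x|ν_k, T_k), is a solution of the multi-population mean field games system: for each k, -ε Δu_k + ½|Du_k|² + λ_k = ½ (x-μ_k)ᵀ (Σ_k^{-1})ᵀ Σ_k^{-1} (x-μ_k) on ℝ^d, ε Δm_k + div(m_k Du_k) = 0 on ℝ^d, β_k = ∫ γ_k(x) f(x) dx, together with m_k ≥ 0, ∫ m_k dx = 1, u_k(μ_k) = 0, where γ_k(x) = β_k m_k(x)/m(x), μ_k = (∫ x γ_k(x) f(x) dx)/(∫ γ_k(x) f(x) dx), and Σ_k = (∫ (x-μ_k)(x-μ_k)ᵀ γ_k(x) f(x)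 dx)/(∫ γ_k(x) f(x) dx). -/
open MeasureTheory Matrix

/-- The gradient `Du` of a function `u : ℝ^d → ℝ`, as the vector of partial derivatives. -/
noncomputable def grad {d : ℕ} (u : (Fin d → ℝ) → ℝ) (x : Fin d → ℝ) : Fin d → ℝ :=
  fun i => fderiv ℝ u x (Pi.single i 1)

/-- The Laplacian `Δu` of a function `u : ℝ^d → ℝ`. -/
noncomputable def lap {d : ℕ} (u : (Fin d → ℝ) → ℝ) (x : Fin d → ℝ) : ℝ :=
  ∑ i, fderiv ℝ (fun y => fderiv ℝ u y (Pi.single i 1)) x (Pi.single i 1)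

/-- The divergence of a vector field `V : ℝ^d → ℝ^d`. -/
noncomputable def dvg {d : ℕ} (V : (Fin d → ℝ) → Fin d → ℝ) (x : Fin d → ℝ) : ℝ :=
  ∑ i, fderiv ℝ (fun y => V y i) x (Pi.single i 1)

section Auxiliary

variable {d : ℕ}

/-- dot product with a fixed vector, as a continuous linear map -/
noncomputable def dotL (v : Fin d → ℝ) : (Fin d → ℝ) →L[ℝ] ℝ :=
  LinearMap.toContinuousLinearMap
    { toFun := fun h => v ⬝ᵥ h
      map_add' := fun a b => dotProduct_add v a b
      map_smul' := fun c a => by simp [dotProduct_smul, smul_eq_mul] }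

@[simp] lemma dotL_apply (v h : Fin d → ℝ) : dotL v h = v ⬝ᵥ h := rfl

noncomputable def bilinL (A : Matrix (Fin d) (Fin d) ℝ) :
    (Fin d → ℝ) →L[ℝ] (Fin d → ℝ) →L[ℝ] ℝ :=
  LinearMap.toContinuousLinearMap
    { toFun := fun v => dotL (Aᵀ *ᵥ v)
      map_add' := fun a b => by
        ext h; simp [Matrix.mulVec_add, add_dotProduct]
      map_smul' := fun c a => by
        ext h; simp [Matrix.mulVec_smul, smul_dotProduct] }

lemma bilinL_apply (A : Matrix (Fin d) (Fin d) ℝ) (v w : Fin d → ℝ) :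
    bilinL A v w = v ⬝ᵥ (A *ᵥ w) := by
  show (Aᵀ *ᵥ v) ⬝ᵥ w = v ⬝ᵥ (A *ᵥ w)
  rw [mulVec_transpose, ← dotProduct_mulVec]

lemma hasFDerivAt_quad (A : Matrix (Fin d) (Fin d) ℝ) (hA : Aᵀ = A) (ν x : Fin d → ℝ) :
    HasFDerivAt (fun y => (y - ν) ⬝ᵥ (A *ᵥ (y - ν))) (dotL ((2:ℝ) • (A *ᵥ (x - ν)))) x := by
  have h1 : HasFDerivAt (fun y : Fin d → ℝ => y - ν) (ContinuousLinearMap.id ℝ _) x :=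
    (hasFDerivAt_id x).sub_const ν
  have hc : HasFDerivAt (fun y => bilinL A (y - ν)) (bilinL A) x := by
    have hc' := (bilinL A).hasFDerivAt.comp x h1
    rw [ContinuousLinearMap.comp_id] at hc'
    exact hc'
  have h2 := hc.clm_apply h1
  have heq : (fun y => bilinL A (y - ν) (y - ν)) = fun y => (y - ν) ⬝ᵥ (A *ᵥ (y - ν)) := by
    funext y; rw [bilinL_apply]
  rw [heq] at h2
  refine h2.congr_fderiv (Eq.symm ?_)
  ext h
  simp only [ContinuousLinearMap.add_apply, ContinuousLinearMap.comp_apply,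
    ContinuousLinearMap.coe_id', id_eq, ContinuousLinearMap.flip_apply, dotL_apply, bilinL_apply]
  have e1 : (x - ν) ⬝ᵥ (A *ᵥ h) = (A *ᵥ (x - ν)) ⬝ᵥ h := by
    rw [dotProduct_mulVec, ← mulVec_transpose, hA]
  rw [smul_dotProduct, e1, dotProduct_comm h, smul_eq_mul]
  ring

lemma hasFDerivAt_affine (A : Matrix (Fin d) (Fin d) ℝ) (ν x : Fin d → ℝ) (i : Fin d) :
    HasFDerivAt (fun y : Fin d → ℝ => (A *ᵥ (y - ν)) i) (dotL (A i)) x := by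
  have h1 : HasFDerivAt (fun y : Fin d → ℝ => y - ν) (ContinuousLinearMap.id ℝ _) x :=
    (hasFDerivAt_id x).sub_const ν
  have hc' := (dotL (A i)).hasFDerivAt.comp x h1
  rw [ContinuousLinearMap.comp_id] at hc'
  exact hc'

lemma hasFDerivAt_pot (A : Matrix (Fin d) (Fin d) ℝ) (hA : Aᵀ = A) (ν : Fin d → ℝ) (ε : ℝ)
    (x : Fin d → ℝ) :
    HasFDerivAt (fun y => ε / 2 * ((y - ν) ⬝ᵥ (A *ᵥ (y - ν)))) (dotL (ε • (A *ᵥ (x - ν)))) x := by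
  have h := (hasFDerivAt_quad A hA ν x).const_mul (ε / 2)
  refine h.congr_fderiv (Eq.symm ?_)
  ext h
  simp only [dotL_apply, ContinuousLinearMap.coe_smul', Pi.smul_apply, dotL_apply,
    smul_dotProduct, smul_eq_mul]
  ring

lemma grad_pot (A : Matrix (Fin d) (Fin d) ℝ) (hA : Aᵀ = A) (ν : Fin d → ℝ) (ε : ℝ)
    (x : Fin d → ℝ) :
    grad (fun y => ε / 2 * ((y - ν) ⬝ᵥ (A *ᵥ (y - ν)))) x = fun i => ε * (A *ᵥ (x - ν)) i := by
  funext i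
  unfold grad
  rw [(hasFDerivAt_pot A hA ν ε x).fderiv]
  simp [dotProduct_single]

lemma lap_pot (A : Matrix (Fin d) (Fin d) ℝ) (hA : Aᵀ = A) (ν : Fin d → ℝ) (ε : ℝ)
    (x : Fin d → ℝ) :
    lap (fun y => ε / 2 * ((y - ν) ⬝ᵥ (A *ᵥ (y - ν)))) x = ε * A.trace := by
  unfold lap
  have key : ∀ i : Fin d,
      (fun y => fderiv ℝ (fun y => ε / 2 * ((y - ν) ⬝ᵥ (A *ᵥ (y - ν)))) y (Pi.single i 1))
        = fun y => ε * (A *ᵥ (y - ν)) i := by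
    intro i; funext y
    rw [(hasFDerivAt_pot A hA ν ε y).fderiv]
    simp [dotProduct_single]
  have key2 : ∀ i : Fin d,
      fderiv ℝ (fun y => fderiv ℝ (fun y => ε / 2 * ((y - ν) ⬝ᵥ (A *ᵥ (y - ν)))) y
        (Pi.single i 1)) x (Pi.single i 1) = ε * A i i := by
    intro i
    rw [key i]
    rw [((hasFDerivAt_affine A ν x i).const_mul ε).fderiv]
    simp [dotProduct_single]
  rw [Finset.sum_congr rfl (fun i _ => key2 i), Matrix.trace, ← Finset.mul_sum]
  rfl

lemma hasFDerivAt_gaussian (ν : Fin d → ℝ) (T : Matrix (Fin d) (Fin d) ℝ)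
    (hT : T⁻¹ᵀ = T⁻¹) (x : Fin d → ℝ) :
    HasFDerivAt (gaussian ν T) ((-(gaussian ν T x)) • dotL (T⁻¹ *ᵥ (x - ν))) x := by
  have hq := hasFDerivAt_quad T⁻¹ hT ν x
  have h1 := (hq.const_mul (-(1/2) : ℝ)).exp
  have h2 := h1.const_mul ((2 * Real.pi) ^ (-(d : ℝ) / 2) * T.det ^ (-(1 : ℝ) / 2))
  refine h2.congr_fderiv (Eq.symm ?_)
  ext h
  simp only [gaussian, ContinuousLinearMap.coe_smul', Pi.smul_apply, dotL_apply, smul_eq_mul,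
    smul_dotProduct]
  ring

lemma fderiv_gaussian (ν : Fin d → ℝ) (T : Matrix (Fin d) (Fin d) ℝ)
    (hT : T⁻¹ᵀ = T⁻¹) (x : Fin d → ℝ) (i : Fin d) :
    fderiv ℝ (gaussian ν T) x (Pi.single i 1)
      = -(gaussian ν T x) * (T⁻¹ *ᵥ (x - ν)) i := by
  rw [(hasFDerivAt_gaussian ν T hT x).fderiv]
  simp [dotProduct_single]

lemma fderiv2_gaussian (ν : Fin d → ℝ) (T : Matrix (Fin d) (Fin d) ℝ)
    (hT : T⁻¹ᵀ = T⁻¹) (x : Fin d → ℝ) (i : Fin d) :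
    fderiv ℝ (fun y => fderiv ℝ (gaussian ν T) y (Pi.single i 1)) x (Pi.single i 1)
      = gaussian ν T x * ((T⁻¹ *ᵥ (x - ν)) i * (T⁻¹ *ᵥ (x - ν)) i)
        - gaussian ν T x * T⁻¹ i i := by
  have key : (fun y => fderiv ℝ (gaussian ν T) y (Pi.single i 1))
      = fun y => -(gaussian ν T y) * (T⁻¹ *ᵥ (y - ν)) i :=
    funext fun y => fderiv_gaussian ν T hT y i
  rw [key]
  have hc : HasFDerivAt (fun y => -(gaussian ν T y))
      (-((-(gaussian ν T x)) • dotL (T⁻¹ *ᵥ (x - ν)))) x :=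
    (hasFDerivAt_gaussian ν T hT x).neg
  have h : HasFDerivAt (fun y => -(gaussian ν T y) * (T⁻¹ *ᵥ (y - ν)) i) _ x :=
    hc.mul (hasFDerivAt_affine T⁻¹ ν x i)
  rw [h.fderiv]
  simp [dotProduct_single]
  ring

lemma fderiv_gauss_mul (ν : Fin d → ℝ) (T : Matrix (Fin d) (Fin d) ℝ)
    (hT : T⁻¹ᵀ = T⁻¹) (ε : ℝ) (x : Fin d → ℝ) (i : Fin d) :
    fderiv ℝ (fun y => gaussian ν T y * (ε * (T⁻¹ *ᵥ (y - ν)) i)) x (Pi.single i 1)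
      = gaussian ν T x * (ε * T⁻¹ i i)
        - ε * (gaussian ν T x * ((T⁻¹ *ᵥ (x - ν)) i * (T⁻¹ *ᵥ (x - ν)) i)) := by
  have h : HasFDerivAt (fun y => gaussian ν T y * (ε * (T⁻¹ *ᵥ (y - ν)) i)) _ x :=
    (hasFDerivAt_gaussian ν T hT x).mul
    ((hasFDerivAt_affine T⁻¹ ν x i).const_mul ε)
  rw [h.fderiv]
  simp [dotProduct_single]
  ring

lemma integral_mulVec_comp (S : Matrix (Fin d) (Fin d) ℝ) (hS : S.det ≠ 0)
    (h : (Fin d → ℝ) → ℝ) (hh : Continuous h) :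
    ∫ x, h (S *ᵥ x) = |S.det|⁻¹ * ∫ y, h y := by
  have hdet : LinearMap.det (Matrix.toLin' S) ≠ 0 := by
    rw [LinearMap.det_toLin']; exact hS
  have hmap := Measure.map_linearMap_addHaar_pi_eq_smul_addHaar hdet
    (volume : Measure (Fin d → ℝ))
  have hcont : Continuous (Matrix.toLin' S) := LinearMap.continuous_of_finiteDimensional _
  have hint := MeasureTheory.integral_map (μ := volume) (φ := ⇑(Matrix.toLin' S))
    hcont.measurable.aemeasurable (f := h) hh.aestronglyMeasurable
  rw [hmap, integral_smul_measure] at hint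
  have heq : (fun x => h ((Matrix.toLin' S) x)) = fun x => h (S *ᵥ x) := by
    funext x; rw [Matrix.toLin'_apply]
  rw [heq] at hint
  rw [← hint, LinearMap.det_toLin', ENNReal.toReal_ofReal (abs_nonneg _), abs_inv,
    smul_eq_mul]

lemma exp_quad_cont (A : Matrix (Fin d) (Fin d) ℝ) :
    Continuous fun y : Fin d → ℝ => Real.exp (-(1 / 2) * (y ⬝ᵥ (A *ᵥ y))) := by
  apply Real.continuous_exp.comp
  apply Continuous.mul continuous_const
  simp only [dotProduct, Matrix.mulVec]
  fun_prop

open scoped MatrixOrder in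
lemma gaussian_integral_one (ν : Fin d → ℝ) (T : Matrix (Fin d) (Fin d) ℝ)
    (hpos : T.PosDef) : ∫ x, gaussian ν T x = 1 := by
  have hApos : (T⁻¹).PosDef := hpos.inv
  have hApsd : (T⁻¹).PosSemidef := hApos.posSemidef
  set S := CFC.sqrt (T⁻¹) with hSdef
  have hSS : S * S = T⁻¹ := CFC.sqrt_mul_sqrt_self _ hApsd.nonneg
  have hSpsd : S.PosSemidef := (CFC.sqrt_nonneg _).posSemidef
  have hSsymm : Sᵀ = S := by
    have := hSpsd.1
    ext i j; simpa using congrFun (congrFun this i) j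
  have hdetS_nonneg : 0 ≤ S.det := by
    rw [hSpsd.1.det_eq_prod_eigenvalues]
    exact Finset.prod_nonneg fun i _ => by simpa using hSpsd.eigenvalues_nonneg i
  have hdetSS : S.det * S.det = (T⁻¹).det := by rw [← det_mul, hSS]
  have hdetA_pos : 0 < (T⁻¹).det := hApos.det_pos
  have hdetS_pos : 0 < S.det := by
    rcases hdetS_nonneg.lt_or_eq with h | h
    · exact h
    · exfalso
      have h0 : (T⁻¹).det = 0 := by rw [← hdetSS, ← h, mul_zero]
      exact hdetA_pos.ne' h0
  have hdetT_pos : 0 < T.det := hpos.det_pos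
  have hquad : ∀ z : Fin d → ℝ, z ⬝ᵥ (T⁻¹ *ᵥ z) = (S *ᵥ z) ⬝ᵥ (S *ᵥ z) := by
    intro z
    rw [← hSS, ← mulVec_mulVec, dotProduct_mulVec, ← mulVec_transpose, hSsymm]
  have h1 : ∫ x, gaussian ν T x
      = (2 * Real.pi) ^ (-(d : ℝ) / 2) * T.det ^ (-(1 : ℝ) / 2) *
        ∫ x, Real.exp (-(1 / 2) * ((x - ν) ⬝ᵥ (T⁻¹ *ᵥ (x - ν)))) := by
    rw [← integral_const_mul]; rfl
  have h2 : (∫ x, Real.exp (-(1 / 2) * ((x - ν) ⬝ᵥ (T⁻¹ *ᵥ (x - ν)))))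
      = ∫ z : Fin d → ℝ, Real.exp (-(1 / 2) * (z ⬝ᵥ (T⁻¹ *ᵥ z))) :=
    integral_sub_right_eq_self (fun z => Real.exp (-(1 / 2) * (z ⬝ᵥ (T⁻¹ *ᵥ z)))) ν
  have h3 : (∫ z : Fin d → ℝ, Real.exp (-(1 / 2) * (z ⬝ᵥ (T⁻¹ *ᵥ z))))
      = |S.det|⁻¹ * ∫ y : Fin d → ℝ, Real.exp (-(1 / 2) * (y ⬝ᵥ y)) := by
    have base := integral_mulVec_comp S hdetS_pos.ne'
      (fun y => Real.exp (-(1 / 2) * (y ⬝ᵥ y)))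
      (by simpa using exp_quad_cont (1 : Matrix (Fin d) (Fin d) ℝ))
    rw [← base]
    congr 1
    funext z
    rw [hquad]
  have h4 : (∫ y : Fin d → ℝ, Real.exp (-(1 / 2) * (y ⬝ᵥ y)))
      = (∫ t : ℝ, Real.exp (-(1 / 2) * t ^ 2)) ^ d := by
    have hprod : (fun y : Fin d → ℝ => Real.exp (-(1 / 2) * (y ⬝ᵥ y)))
        = fun y => ∏ i, Real.exp (-(1 / 2) * (y i) ^ 2) := by
      funext y
      rw [← Real.exp_sum]
      congr 1
      rw [dotProduct, Finset.mul_sum]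
      exact Finset.sum_congr rfl fun i _ => by ring
    rw [hprod]
    rw [MeasureTheory.integral_fintype_prod_volume_eq_pow (ι := Fin d)
      (fun t : ℝ => Real.exp (-(1 / 2) * t ^ 2)), Fintype.card_fin]
  have h5 : (∫ t : ℝ, Real.exp (-(1 / 2) * t ^ 2)) = Real.sqrt (2 * Real.pi) := by
    rw [integral_gaussian]
    congr 1
    ring
  have hdetS : S.det = Real.sqrt ((T.det)⁻¹) := by
    have hinv : (T⁻¹).det = (T.det)⁻¹ := by
      rw [Matrix.det_nonsing_inv, Ring.inverse_eq_inv']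
    rw [hinv] at hdetSS
    rw [← hdetSS, Real.sqrt_mul_self hdetS_nonneg]
  rw [h1, h2, h3, h4, h5, hdetS, abs_of_nonneg (Real.sqrt_nonneg _)]
  have h2pi : (0:ℝ) < 2 * Real.pi := by positivity
  have e1 : (Real.sqrt (2 * Real.pi)) ^ d = (2 * Real.pi) ^ ((d : ℝ) / 2) := by
    rw [Real.sqrt_eq_rpow, ← Real.rpow_natCast ((2 * Real.pi) ^ ((1:ℝ)/2)) d,
      ← Real.rpow_mul h2pi.le]
    congr 1
    ring
  have e2 : Real.sqrt ((T.det)⁻¹) = T.det ^ (-(1:ℝ)/2) := by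
    rw [Real.sqrt_eq_rpow, Real.inv_rpow hdetT_pos.le, ← Real.rpow_neg hdetT_pos.le]
    norm_num
  have e3 : (2 * Real.pi) ^ (-(d:ℝ)/2) * (2 * Real.pi) ^ ((d:ℝ)/2) = 1 := by
    rw [← Real.rpow_add h2pi, show -(d:ℝ)/2 + (d:ℝ)/2 = 0 by ring, Real.rpow_zero]
  have e4 : (0:ℝ) < T.det ^ (-(1:ℝ)/2) := Real.rpow_pos_of_pos hdetT_pos _
  rw [e1, e2]
  have rearr : (2 * Real.pi) ^ (-(d:ℝ)/2) * T.det ^ (-(1:ℝ)/2) *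
      ((T.det ^ (-(1:ℝ)/2))⁻¹ * (2 * Real.pi) ^ ((d:ℝ)/2))
      = ((2 * Real.pi) ^ (-(d:ℝ)/2) * (2 * Real.pi) ^ ((d:ℝ)/2)) *
        (T.det ^ (-(1:ℝ)/2) * (T.det ^ (-(1:ℝ)/2))⁻¹) := by ring
  rw [rearr, e3, mul_inv_cancel₀ e4.ne', mul_one]

end Auxiliary

/-- If `m(x) = Σ_k β_k N(x|ν_k,T_k)` is a Gaussian mixture consistent with the data set `f`
with parameter `ε > 0`, then the quadruples `(u_k, λ_k, m_k, β_k)` with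
`u_k(x) = (ε/2)(x-ν_k)ᵀ T_k⁻¹ (x-ν_k)`, `λ_k = ε² Tr(T_k⁻¹)`, `m_k(x) = N(x|ν_k,T_k)`
solve the multi-population mean field games system. -/
theorem consistent_mixture_solves_MFG {d K : ℕ}
    (ε : ℝ) (hε : 0 < ε)
    (f : (Fin d → ℝ) → ℝ) (hf0 : ∀ x, 0 ≤ f x) (hf1 : ∫ x, f x = 1)
    (β : Fin K → ℝ) (hβ : ∀ k, β k ∈ Set.Ioo (0 : ℝ) 1) (hβ1 : ∑ k, β k = 1)
    (ν : Fin K → Fin d → ℝ) (T : Fin K → Matrix (Fin d) (Fin d) ℝ)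
    (hTsymm : ∀ k, (T k).IsSymm) (hTpos : ∀ k, (T k).PosDef)
    -- the mixture components and the mixture :
    (mk : Fin K → (Fin d → ℝ) → ℝ) (hmk : ∀ k x, mk k x = gaussian (ν k) (T k) x)
    (m : (Fin d → ℝ) → ℝ) (hm : ∀ x, m x = ∑ k, β k * mk k x)
    -- the responsibilities :
    (γ : Fin K → (Fin d → ℝ) → ℝ) (hγ : ∀ k x, γ k x = β k * mk k x / m x)
    -- consistency with the data set, with parameter ε :
    (hmean : ∀ k i, ν k i = (∫ x, x i * γ k x * f x) / ∫ x, γ k x * f x)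
    (hTcons : ∀ k i j, T k i j =
      ε * (∫ x, (x i - ν k i) * (x j - ν k j) * γ k x * f x) / ∫ x, γ k x * f x)
    (hweight : ∀ k, β k = ∫ x, γ k x * f x)
    -- the means and covariance matrices computed with respect to the data set :
    (μ : Fin K → Fin d → ℝ)
    (hμ : ∀ k i, μ k i = (∫ x, x i * γ k x * f x) / ∫ x, γ k x * f x)
    (Sg : Fin K → Matrix (Fin d) (Fin d) ℝ)
    (hSg : ∀ k i j, Sg k i j =
      (∫ x, (x i - μ k i) * (x j - μ k j) * γ k x * f x) / ∫ x, γ k x * f x)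
    -- the candidate solution :
    (u : Fin K → (Fin d → ℝ) → ℝ)
    (hu : ∀ k x, u k x = ε / 2 * ((x - ν k) ⬝ᵥ ((T k)⁻¹ *ᵥ (x - ν k))))
    (lam : Fin K → ℝ) (hlam : ∀ k, lam k = ε ^ 2 * (T k)⁻¹.trace) :
    ∀ k,
      (∀ x, -ε * lap (u k) x + 1 / 2 * (grad (u k) x ⬝ᵥ grad (u k) x) + lam k =
        1 / 2 * ((x - μ k) ⬝ᵥ (((Sg k)⁻¹)ᵀ *ᵥ ((Sg k)⁻¹ *ᵥ (x - μ k))))) ∧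
      (∀ x, ε * lap (mk k) x + dvg (fun y => mk k y • grad (u k) y) x = 0) ∧
      (β k = ∫ x, γ k x * f x) ∧
      (∀ x, 0 ≤ mk k x) ∧ (∫ x, mk k x = 1) ∧ u k (μ k) = 0 := by
  intro k
  have hμν : μ k = ν k := funext fun i => (hμ k i).trans (hmean k i).symm
  have hTs : (T k)ᵀ = T k := hTsymm k
  have hAs : ((T k)⁻¹)ᵀ = (T k)⁻¹ := by
    rw [Matrix.transpose_nonsing_inv, hTs]
  have hu' : u k = fun y => ε / 2 * ((y - ν k) ⬝ᵥ ((T k)⁻¹ *ᵥ (y - ν k))) := funext (hu k)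
  have hmk' : mk k = gaussian (ν k) (T k) := funext (hmk k)
  have hdetT_pos : 0 < (T k).det := (hTpos k).det_pos
  refine ⟨?_, ?_, hweight k, ?_, ?_, ?_⟩
  · -- HJB equation
    intro x
    have hSg' : Sg k = ε⁻¹ • T k := by
      ext i j
      simp only [Matrix.smul_apply, smul_eq_mul]
      rw [hSg k i j, hμν, hTcons k i j, mul_div_assoc, ← mul_assoc,
        inv_mul_cancel₀ hε.ne', one_mul]
    have hSgInv : (Sg k)⁻¹ = ε • (T k)⁻¹ := by
      apply Matrix.inv_eq_right_inv
      rw [hSg', Matrix.smul_mul, Matrix.mul_smul, smul_smul,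
        inv_mul_cancel₀ hε.ne', one_smul,
        Matrix.mul_nonsing_inv _ (isUnit_iff_ne_zero.2 hdetT_pos.ne')]
    rw [hμν, hSgInv, Matrix.transpose_smul, hAs, hu', hlam k,
      lap_pot ((T k)⁻¹) hAs (ν k) ε x, grad_pot ((T k)⁻¹) hAs (ν k) ε x]
    have hgg : (fun i => ε * ((T k)⁻¹ *ᵥ (x - ν k)) i) ⬝ᵥ
        (fun i => ε * ((T k)⁻¹ *ᵥ (x - ν k)) i)
        = ε * (ε * (((T k)⁻¹ *ᵥ (x - ν k)) ⬝ᵥ ((T k)⁻¹ *ᵥ (x - ν k)))) := by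
      show (ε • ((T k)⁻¹ *ᵥ (x - ν k))) ⬝ᵥ (ε • ((T k)⁻¹ *ᵥ (x - ν k))) = _
      rw [smul_dotProduct, dotProduct_smul, smul_eq_mul, smul_eq_mul]
    have hrhs : (x - ν k) ⬝ᵥ ((ε • (T k)⁻¹) *ᵥ ((ε • (T k)⁻¹) *ᵥ (x - ν k)))
        = ε * (ε * ((x - ν k) ⬝ᵥ ((T k)⁻¹ *ᵥ ((T k)⁻¹ *ᵥ (x - ν k))))) := by
      rw [Matrix.smul_mulVec, Matrix.smul_mulVec, Matrix.mulVec_smul,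
        dotProduct_smul, dotProduct_smul, smul_eq_mul, smul_eq_mul]
    have hkey : (x - ν k) ⬝ᵥ ((T k)⁻¹ *ᵥ ((T k)⁻¹ *ᵥ (x - ν k)))
        = ((T k)⁻¹ *ᵥ (x - ν k)) ⬝ᵥ ((T k)⁻¹ *ᵥ (x - ν k)) := by
      rw [dotProduct_mulVec, ← mulVec_transpose, hAs]
    rw [hgg, hrhs, hkey]
    ring
  · -- Fokker-Planck equation
    intro x
    have hgradu : ∀ y, grad (u k) y = fun i => ε * ((T k)⁻¹ *ᵥ (y - ν k)) i := by
      intro y; rw [hu']; exact grad_pot ((T k)⁻¹) hAs (ν k) ε y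
    have hVeq : ∀ i : Fin d, (fun y => (mk k y • grad (u k) y) i)
        = fun y => gaussian (ν k) (T k) y * (ε * ((T k)⁻¹ *ᵥ (y - ν k)) i) := by
      intro i; funext y
      rw [Pi.smul_apply, smul_eq_mul, hmk k y, hgradu y]
    have hlapmk : lap (mk k) x = ∑ i, (gaussian (ν k) (T k) x *
        (((T k)⁻¹ *ᵥ (x - ν k)) i * ((T k)⁻¹ *ᵥ (x - ν k)) i)
        - gaussian (ν k) (T k) x * (T k)⁻¹ i i) := by
      rw [hmk']
      unfold lap
      exact Finset.sum_congr rfl fun i _ => fderiv2_gaussian (ν k) (T k) hAs x i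
    have hdvg : dvg (fun y => mk k y • grad (u k) y) x = ∑ i,
        (gaussian (ν k) (T k) x * (ε * (T k)⁻¹ i i)
          - ε * (gaussian (ν k) (T k) x *
            (((T k)⁻¹ *ᵥ (x - ν k)) i * ((T k)⁻¹ *ᵥ (x - ν k)) i))) := by
      unfold dvg
      refine Finset.sum_congr rfl fun i _ => ?_
      rw [hVeq i]
      exact fderiv_gauss_mul (ν k) (T k) hAs ε x i
    rw [hlapmk, hdvg, Finset.mul_sum, ← Finset.sum_add_distrib]
    exact Finset.sum_eq_zero fun i _ => by ring
  · -- nonnegativity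
    intro x
    rw [hmk k x]
    unfold gaussian
    have p1 : (0:ℝ) < (2 * Real.pi) ^ (-(d : ℝ) / 2) :=
      Real.rpow_pos_of_pos (by positivity) _
    have p2 : (0:ℝ) < (T k).det ^ (-(1 : ℝ) / 2) := Real.rpow_pos_of_pos hdetT_pos _
    positivity
  · -- total mass one
    simp only [hmk]
    exact gaussian_integral_one (ν k) (T k) (hTpos k)
  · -- u k (μ k) = 0
    rw [hu k, hμν, sub_self]
    simp
end
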